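/- Let 𝒟 and H be complex Hilbert spaces, Σ ⊆ ℂ open and connected, and P : Σ → L(𝒟, H) a holomorphic family of bounded operators such that each P(σ) is Fredholm of index 0 and there exists σ₁ ∈ Σ with P(σ₁) bijective. Then the set Z = {σ ∈ Σ : P(σ) is not bijective} is a discrete subset of ℂ and is closed in Σ. -/

import Mathlib

open Metric Set Complex

noncomputable section

/-- A principal part at `c ∈ ℂ` with values in a complex vector space `E`:
`φ(σ) = ∑_{k=1}^m a_k (σ - c)^{-k}` (with the convention that the value at the pole is `0`,
coming from `0⁻¹ = 0` in Lean; for `σ ≠ c` this is exactly the usual formula). -/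
def IsPrincipalPart {E : Type*} [AddCommGroup E] [Module ℂ E] (c : ℂ) (φ : ℂ → E) : Prop :=
  ∃ (m : ℕ) (a : ℕ → E), ∀ σ : ℂ, φ σ = ∑ k ∈ Finset.Icc 1 m, ((σ - c) ^ (-(k : ℤ))) • a k

/-- A singular function with poles in `S ⊆ ℂ`: a finite sum of principal parts at
finitely many points of `S`. -/
def IsSingularFunction {E : Type*} [AddCommGroup E] [Module ℂ E] (S : Set ℂ) (φ : ℂ → E) :
    Prop :=
  ∃ (F : Finset ℂ) (p : ℂ → ℂ → E), (↑F : Set ℂ) ⊆ S ∧ (∀ c ∈ F, IsPrincipalPart c (p c)) ∧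
    ∀ σ : ℂ, φ σ = ∑ c ∈ F, p c σ

/-- The space `𝒦` of singular functions `φ` with poles in `Ω` such that `σ ↦ P σ (φ σ)`
agrees, off a finite set (the poles of `φ`), with a function holomorphic on all of `Ω`. -/
def kernelSpace {𝒟 H : Type*} [NormedAddCommGroup 𝒟] [NormedSpace ℂ 𝒟]
    [NormedAddCommGroup H] [NormedSpace ℂ H]
    (Ω : Set ℂ) (P : ℂ → (𝒟 →L[ℂ] H)) : Set (ℂ → 𝒟) :=
  {φ | IsSingularFunction Ω φ ∧ ∃ g : ℂ → H, DifferentiableOn ℂ g Ω ∧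
    ∃ F : Set ℂ, F.Finite ∧ ∀ σ ∈ Ω \ F, P σ (φ σ) = g σ}

/-- The local kernel space `𝔎(𝔓, S)` of a holomorphic family of `n × n` matrices on `D`:
singular functions `φ : ℂ → ℂⁿ` with poles in `S` such that `σ ↦ 𝔓(σ) · φ(σ)` agrees,
off a finite set (the poles of `φ`), with a function holomorphic on all of `D`. -/
def matKernelSpace {n : ℕ} (D : Set ℂ) (P : ℂ → Matrix (Fin n) (Fin n) ℂ) (S : Set ℂ) :
    Set (ℂ → (Fin n → ℂ)) :=
  {φ | IsSingularFunction S φ ∧ ∃ g : ℂ → (Fin n → ℂ),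
    (∀ i, DifferentiableOn ℂ (fun σ => g σ i) D) ∧
    ∃ F : Set ℂ, F.Finite ∧ ∀ σ ∈ D \ F, (P σ).mulVec (φ σ) = g σ}

/-- A subset `K` of a complex vector space (in practice a linear subspace) has a basis of
cardinality `d`: there are `d` elements of `K` that are linearly independent and span `K`. -/
def HasBasisOfCard {E : Type*} [AddCommGroup E] [Module ℂ E] (K : Set E) (d : ℕ) : Prop :=
  ∃ φ : Fin d → E, (∀ i, φ i ∈ K) ∧ LinearIndependent ℂ φ ∧
    ∀ ψ ∈ K, ψ ∈ Submodule.span ℂ (Set.range φ)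

/-- A bounded operator is Fredholm of index `0`: finite-dimensional kernel, closed range,
finite-dimensional cokernel, and `dim ker = dim coker`. -/
def FredholmIndexZero {𝒟 H : Type*} [NormedAddCommGroup 𝒟] [NormedSpace ℂ 𝒟]
    [NormedAddCommGroup H] [NormedSpace ℂ H] (T : 𝒟 →L[ℂ] H) : Prop :=
  FiniteDimensional ℂ (LinearMap.ker (T : 𝒟 →ₗ[ℂ] H)) ∧
    IsClosed (LinearMap.range (T : 𝒟 →ₗ[ℂ] H) : Set H) ∧
    FiniteDimensional ℂ (H ⧸ LinearMap.range (T : 𝒟 →ₗ[ℂ] H)) ∧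
    Module.finrank ℂ (LinearMap.ker (T : 𝒟 →ₗ[ℂ] H)) = Module.finrank ℂ (H ⧸ LinearMap.range (T : 𝒟 →ₗ[ℂ] H))

/-- the singular set of a holomorphic Fredholm family of index `0` which is
invertible at some point is discrete and closed in `Ω`. -/
lemma aux_bij {X Y : Type*} [AddCommGroup X] [Module ℂ X] [AddCommGroup Y] [Module ℂ Y]
    (B : Y →ₗ[ℂ] X) (p : X →ₗ[ℂ] Y)
    (h : Function.Bijective (fun x : X => x - B (p x))) :
    Function.Bijective (fun y : Y => y - p (B y)) := by
  constructor
  · intro v w hvw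
    simp only at hvw
    set u := v - w with hu
    have h2 : u - p (B u) = 0 := by
      have : u - p (B u) = (v - p (B v)) - (w - p (B w)) := by
        rw [hu, map_sub, map_sub]; abel
      rw [this, hvw, sub_self]
    have h3 : (fun x : X => x - B (p x)) (B u) = (fun x : X => x - B (p x)) 0 := by
      simp only [map_zero, sub_zero]
      rw [show B u - B (p (B u)) = B (u - p (B u)) from (map_sub B _ _).symm, h2, map_zero]
    have hBu : B u = 0 := h.1 h3
    have : u = 0 := by
      have := h2
      rw [hBu, map_zero, sub_zero] at this
      exact this
    exact sub_eq_zero.mp (hu ▸ this)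
  · intro w
    obtain ⟨x, hx⟩ := h.2 (B w)
    simp only at hx
    refine ⟨w + p x, ?_⟩
    simp only
    have hcalc : w + p x - p (B (w + p x)) = w + p (x - B (p x)) - p (B w) := by
      rw [map_sub, map_add, map_add]; abel
    rw [hcalc, hx]; abel

lemma aux_bij_iff {X Y : Type*} [AddCommGroup X] [Module ℂ X] [AddCommGroup Y] [Module ℂ Y]
    (B : Y →ₗ[ℂ] X) (p : X →ₗ[ℂ] Y) :
    Function.Bijective (fun x : X => x - B (p x)) ↔
      Function.Bijective (fun y : Y => y - p (B y)) :=
  ⟨aux_bij B p, aux_bij p B⟩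

lemma local_det {𝒟 H : Type*}
    [NormedAddCommGroup 𝒟] [InnerProductSpace ℂ 𝒟] [CompleteSpace 𝒟]
    [NormedAddCommGroup H] [InnerProductSpace ℂ H] [CompleteSpace H]
    (Ω : Set ℂ) (hΩopen : IsOpen Ω)
    (P : ℂ → (𝒟 →L[ℂ] H)) (hholo : DifferentiableOn ℂ P Ω)
    (σ₀ : ℂ) (hσ₀ : σ₀ ∈ Ω) (hF : FredholmIndexZero (P σ₀)) :
    ∃ r > 0, ball σ₀ r ⊆ Ω ∧ ∃ f : ℂ → ℂ, DifferentiableOn ℂ f (ball σ₀ r) ∧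
      ∀ σ ∈ ball σ₀ r, (Function.Bijective (P σ) ↔ f σ ≠ 0) := by
  classical
  obtain ⟨hker, hclosed, hcoker, hdim⟩ := hF
  set T := P σ₀ with hT
  set N : Submodule ℂ 𝒟 := LinearMap.ker (T : 𝒟 →ₗ[ℂ] H) with hN
  set K : Submodule ℂ H := LinearMap.range (T : 𝒟 →ₗ[ℂ] H) with hK
  haveI : FiniteDimensional ℂ N := hker
  haveI : CompleteSpace K := hclosed.completeSpace_coe
  have hcompl : IsCompl K Kᗮ := Submodule.isCompl_orthogonal_of_hasOrthogonalProjection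
  let e : (H ⧸ K) ≃ₗ[ℂ] Kᗮ := Submodule.quotientEquivOfIsCompl K Kᗮ hcompl
  haveI : FiniteDimensional ℂ Kᗮ := Module.Finite.equiv e
  have hrank : Module.finrank ℂ N = Module.finrank ℂ Kᗮ := hdim.trans e.finrank_eq
  let J : N ≃ₗ[ℂ] Kᗮ := LinearEquiv.ofFinrankEq _ _ hrank
  let Jc : N →L[ℂ] Kᗮ := LinearMap.toContinuousLinearMap J.toLinearMap
  let π : 𝒟 →L[ℂ] N := Submodule.orthogonalProjection N
  let Q : 𝒟 →L[ℂ] H := Kᗮ.subtypeL.comp (Jc.comp π)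
  -- T + Q is bijective
  have hQapp : ∀ x, Q x = (Jc (π x) : H) := fun x => rfl
  have hJc : ∀ v : N, Jc v = J v := fun v => rfl
  have hker' : LinearMap.ker ((T + Q : 𝒟 →L[ℂ] H) : 𝒟 →ₗ[ℂ] H) = ⊥ := by
    rw [LinearMap.ker_eq_bot']
    intro x hx
    have hx' : T x + (Jc (π x) : H) = 0 := by
      simpa [hQapp] using hx
    have hTK : T x ∈ K := ⟨x, rfl⟩
    have hTKo : T x ∈ Kᗮ := by
      have : T x = -(Jc (π x) : H) := by
        rw [eq_neg_iff_add_eq_zero]; exact hx'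
      rw [this]
      exact neg_mem (Jc (π x)).2
    have hT0 : T x = 0 := by
      have := hcompl.disjoint
      exact (Submodule.disjoint_def.mp this) _ hTK hTKo
    have hQ0 : (Jc (π x) : H) = 0 := by
      rw [hT0, zero_add] at hx'; exact hx'
    have hπ0 : π x = 0 := by
      apply J.injective
      rw [map_zero]
      rw [← hJc]
      exact Subtype.coe_injective hQ0
    have hxN : x ∈ N := LinearMap.mem_ker.mpr hT0
    have : π x = ⟨x, hxN⟩ := Submodule.orthogonalProjection_mem_subspace_eq_self (K := N) ⟨x, hxN⟩
    have : (⟨x, hxN⟩ : N) = 0 := by rw [← this, hπ0]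
    exact congrArg Subtype.val this
  have hrange' : LinearMap.range ((T + Q : 𝒟 →L[ℂ] H) : 𝒟 →ₗ[ℂ] H) = ⊤ := by
    rw [LinearMap.range_eq_top]
    intro h
    have hmem : h ∈ K ⊔ Kᗮ := by rw [hcompl.sup_eq_top]; trivial
    obtain ⟨y, hy, z, hz, hyz⟩ := Submodule.mem_sup.mp hmem
    obtain ⟨x₀, hx₀⟩ := hy
    set v : N := J.symm ⟨z, hz⟩ with hv
    refine ⟨x₀ - (π x₀ : 𝒟) + (v : 𝒟), ?_⟩
    have hπv : π (x₀ - (π x₀ : 𝒟) + (v : 𝒟)) = v := by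
      rw [map_add, map_sub]
      rw [Submodule.orthogonalProjection_mem_subspace_eq_self (K := N) (π x₀),
        Submodule.orthogonalProjection_mem_subspace_eq_self (K := N) v]
      abel
    have hTv : T (x₀ - (π x₀ : 𝒟) + (v : 𝒟)) = y := by
      have h1 : T ((π x₀ : N) : 𝒟) = 0 := LinearMap.mem_ker.mp (π x₀).2
      have h2 : T ((v : N) : 𝒟) = 0 := LinearMap.mem_ker.mp v.2
      rw [map_add, map_sub, h1, h2, show T x₀ = y from hx₀]; abel
    show T _ + Q _ = h
    rw [hTv, hQapp, hπv, hJc, hv, J.apply_symm_apply, ← hyz]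
  let E := ContinuousLinearEquiv.ofBijective (T + Q) hker' hrange'
  set R : ℂ → (𝒟 →L[ℂ] 𝒟) := fun σ => (↑E.symm : H →L[ℂ] 𝒟).comp (P σ + Q) with hR
  have hEsymm : ∀ x : 𝒟, E.symm ((T + Q) x) = x := fun x => E.symm_apply_apply x
  have hR0 : R σ₀ = 1 := by
    ext x
    show E.symm ((T + Q) x) = x
    exact hEsymm x
  have hRdiff : DifferentiableOn ℂ R Ω := by
    have hcomp : Differentiable ℂ (fun A : 𝒟 →L[ℂ] H =>
        (ContinuousLinearMap.compL ℂ 𝒟 H 𝒟 (↑E.symm : H →L[ℂ] 𝒟)) (A + Q)) :=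
      (ContinuousLinearMap.compL ℂ 𝒟 H 𝒟 (↑E.symm : H →L[ℂ] 𝒟)).differentiable.comp
        (differentiable_id.add_const Q)
    exact hcomp.comp_differentiableOn hholo
  have hunits : IsOpen (Ω ∩ R ⁻¹' {A : 𝒟 →L[ℂ] 𝒟 | IsUnit A}) :=
    ContinuousOn.isOpen_inter_preimage hRdiff.continuousOn hΩopen Units.isOpen
  obtain ⟨r, hr0, hball⟩ := Metric.isOpen_iff.mp hunits σ₀
    ⟨hσ₀, by simp [hR0]⟩
  refine ⟨r, hr0, fun σ hσ => (hball hσ).1, ?_⟩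
  let B₀ : N →L[ℂ] 𝒟 := (↑E.symm : H →L[ℂ] 𝒟).comp (Kᗮ.subtypeL.comp Jc)
  let W : ℂ → (𝒟 →L[ℂ] 𝒟) := fun σ => Ring.inverse (R σ)
  let G : ℂ → (N →L[ℂ] N) := fun σ => π.comp ((W σ).comp B₀)
  let n := Module.finrank ℂ N
  let b : Module.Basis (Fin n) ℂ N := Module.finBasis ℂ N
  let M : ℂ → Matrix (Fin n) (Fin n) ℂ := fun σ =>
    LinearMap.toMatrixAlgEquiv b ((1 - G σ : N →L[ℂ] N) : N →ₗ[ℂ] N)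
  refine ⟨fun σ => (M σ).det, ?_, ?_⟩
  · -- differentiability
    have hW : DifferentiableOn ℂ W (ball σ₀ r) :=
      DifferentiableOn.inverse (hRdiff.mono (fun σ hσ => (hball hσ).1))
        (fun σ hσ => (hball hσ).2)
    have hentry : ∀ i j : Fin n, DifferentiableOn ℂ (fun σ => M σ i j) (ball σ₀ r) := by
      intro i j
      have h1 : DifferentiableOn ℂ (fun σ => W σ (B₀ (b j))) (ball σ₀ r) :=
        hW.clm_apply (differentiableOn_const _)
      have h2 : DifferentiableOn ℂ
          (fun σ => (LinearMap.toContinuousLinearMap (b.coord i)) (π (W σ (B₀ (b j)))))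
          (ball σ₀ r) :=
        ((((LinearMap.toContinuousLinearMap (b.coord i)).comp π)).differentiable).comp_differentiableOn h1
      have heq : ∀ σ, M σ i j
          = b.repr (b j) i - (LinearMap.toContinuousLinearMap (b.coord i)) (π (W σ (B₀ (b j)))) := by
        intro σ
        simp [M, LinearMap.toMatrixAlgEquiv_apply, G, map_sub, Module.Basis.coord_apply,
          ContinuousLinearMap.sub_apply, ContinuousLinearMap.one_apply, Matrix.one_apply, Finsupp.single_eq_pi_single, Pi.single_apply]
      simp only [heq]
      exact (differentiableOn_const _).sub h2
    have hdet : DifferentiableOn ℂ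
        (fun σ => ∑ p : Equiv.Perm (Fin n),
          ((Equiv.Perm.sign p : ℤ) : ℂ) * ∏ i, M σ (p i) i) (ball σ₀ r) := by
      apply DifferentiableOn.fun_sum
      intro p _
      exact ((DifferentiableOn.fun_finset_prod (u := Finset.univ)
        (fun i _ => hentry (p i) i))).const_mul _
    have : (fun σ => (M σ).det)
        = fun σ => ∑ p : Equiv.Perm (Fin n),
          ((Equiv.Perm.sign p : ℤ) : ℂ) * ∏ i, M σ (p i) i := by
      funext σ; rw [Matrix.det_apply']
    rw [this]
    exact hdet
  · -- the equivalence
    intro σ hσ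
    have hσΩ : σ ∈ Ω := (hball hσ).1
    have hunit : IsUnit (R σ) := (hball hσ).2
    obtain ⟨u, hu⟩ := hunit
    have hWu : W σ = (↑u⁻¹ : 𝒟 →L[ℂ] 𝒟) := by
      show Ring.inverse (R σ) = _
      rw [← hu, Ring.inverse_unit]
    -- u is bijective as a map
    have hubij : Function.Bijective (⇑(↑u : 𝒟 →L[ℂ] 𝒟)) := by
      apply Function.bijective_iff_has_inverse.mpr
      refine ⟨⇑(↑u⁻¹ : 𝒟 →L[ℂ] 𝒟), fun x => ?_, fun x => ?_⟩
      · show (↑u⁻¹ : 𝒟 →L[ℂ] 𝒟) ((↑u : 𝒟 →L[ℂ] 𝒟) x) = x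
        rw [← ContinuousLinearMap.mul_apply, u.inv_mul, ContinuousLinearMap.one_apply]
      · show (↑u : 𝒟 →L[ℂ] 𝒟) ((↑u⁻¹ : 𝒟 →L[ℂ] 𝒟) x) = x
        rw [← ContinuousLinearMap.mul_apply, u.mul_inv, ContinuousLinearMap.one_apply]
    -- E.symm is bijective
    have hEbij : Function.Bijective (⇑E.symm) := E.symm.toEquiv.bijective
    -- step (a): P σ bijective ↔ E.symm ∘ P σ bijective
    have stepA : Function.Bijective (P σ) ↔ Function.Bijective (fun x => E.symm (P σ x)) := by
      constructor
      · intro h; exact hEbij.comp h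
      · intro h
        have : ⇑(P σ) = ⇑E ∘ (fun x => E.symm (P σ x)) := by
          funext x; simp
        rw [this]
        exact E.toEquiv.bijective.comp h
    -- step (b): E.symm (P σ x) = R σ x - B₀ (π x)
    have stepB : ∀ x, E.symm (P σ x) = R σ x - B₀ (π x) := by
      intro x
      have : R σ x = E.symm (P σ x) + E.symm (Q x) := by
        show E.symm ((P σ + Q) x) = _
        rw [ContinuousLinearMap.add_apply, map_add]
      have hB : E.symm (Q x) = B₀ (π x) := rfl
      rw [this, hB]; abel
    -- step (c): R σ x - B₀ (π x) = u (x - u⁻¹ (B₀ (π x)))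
    have stepC : ∀ x, R σ x - B₀ (π x)
        = (↑u : 𝒟 →L[ℂ] 𝒟) (x - (↑u⁻¹ : 𝒟 →L[ℂ] 𝒟) (B₀ (π x))) := by
      intro x
      rw [map_sub, ← ContinuousLinearMap.mul_apply, u.mul_inv,
        ContinuousLinearMap.one_apply, hu]
    -- combine
    have hchain : Function.Bijective (P σ) ↔
        Function.Bijective (fun x : 𝒟 => x - (↑u⁻¹ : 𝒟 →L[ℂ] 𝒟) (B₀ (π x))) := by
      rw [stepA]
      have : (fun x => E.symm (P σ x))
          = ⇑(↑u : 𝒟 →L[ℂ] 𝒟) ∘ (fun x : 𝒟 => x - (↑u⁻¹ : 𝒟 →L[ℂ] 𝒟) (B₀ (π x))) := by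
        funext x; rw [stepB, stepC]; rfl
      rw [this]
      constructor
      · intro h
        have := (Function.Bijective.of_comp_iff' hubij _).mp h
        exact this
      · intro h; exact hubij.comp h
    -- finite-dimensional reduction
    have hfd : Function.Bijective (fun x : 𝒟 => x - (↑u⁻¹ : 𝒟 →L[ℂ] 𝒟) (B₀ (π x))) ↔
        Function.Bijective (fun v : N => v - π ((↑u⁻¹ : 𝒟 →L[ℂ] 𝒟) (B₀ v))) :=
      aux_bij_iff (((↑u⁻¹ : 𝒟 →L[ℂ] 𝒟).comp B₀) : N →ₗ[ℂ] 𝒟) (π : 𝒟 →ₗ[ℂ] N)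
    have hGfun : (fun v : N => v - π ((↑u⁻¹ : 𝒟 →L[ℂ] 𝒟) (B₀ v))) = ⇑(1 - G σ : N →L[ℂ] N) := by
      funext v
      simp [G, hWu, ContinuousLinearMap.sub_apply, ContinuousLinearMap.one_apply]
    have hend : Function.Bijective (⇑(1 - G σ : N →L[ℂ] N)) ↔ (M σ).det ≠ 0 := by
      rw [show (⇑(1 - G σ : N →L[ℂ] N)) = ⇑(((1 - G σ : N →L[ℂ] N) : N →ₗ[ℂ] N)) from rfl,
        ← Module.End.isUnit_iff (((1 - G σ : N →L[ℂ] N) : N →ₗ[ℂ] N))]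
      constructor
      · intro h
        have h2 : IsUnit (M σ) := h.map (LinearMap.toMatrixAlgEquiv b)
        exact isUnit_iff_ne_zero.mp ((Matrix.isUnit_iff_isUnit_det _).mp h2)
      · intro h
        have h2 : IsUnit (M σ) := (Matrix.isUnit_iff_isUnit_det _).mpr (isUnit_iff_ne_zero.mpr h)
        have h3 := h2.map (LinearMap.toMatrixAlgEquiv b).symm
        simpa [M] using h3
    rw [hchain, hfd, hGfun]
    exact hend

theorem statement7 {𝒟 H : Type*}
    [NormedAddCommGroup 𝒟] [InnerProductSpace ℂ 𝒟] [CompleteSpace 𝒟]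
    [NormedAddCommGroup H] [InnerProductSpace ℂ H] [CompleteSpace H]
    (Ω : Set ℂ) (hΩopen : IsOpen Ω) (hΩconn : IsConnected Ω)
    (P : ℂ → (𝒟 →L[ℂ] H)) (hholo : DifferentiableOn ℂ P Ω)
    (hFred : ∀ σ ∈ Ω, FredholmIndexZero (P σ))
    (σ₁ : ℂ) (hσ₁ : σ₁ ∈ Ω) (hbij : Function.Bijective (P σ₁)) :
    (∀ z ∈ {σ ∈ Ω | ¬ Function.Bijective (P σ)}, ∃ V ∈ nhds z,
      V ∩ {σ ∈ Ω | ¬ Function.Bijective (P σ)} = {z}) ∧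
    closure {σ ∈ Ω | ¬ Function.Bijective (P σ)} ∩ Ω ⊆
      {σ ∈ Ω | ¬ Function.Bijective (P σ)} := by
  classical
  set Z := {σ ∈ Ω | ¬ Function.Bijective (P σ)} with hZdef
  have hloc : ∀ σ₀ ∈ Ω, ∃ r > 0, ball σ₀ r ⊆ Ω ∧ ∃ f : ℂ → ℂ,
      DifferentiableOn ℂ f (ball σ₀ r) ∧
      ∀ σ ∈ ball σ₀ r, (Function.Bijective (P σ) ↔ f σ ≠ 0) :=
    fun σ₀ h => local_det Ω hΩopen P hholo σ₀ h (hFred σ₀ h)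
  have hZΩ : Z ⊆ Ω := fun σ h => h.1
  set G := interior Z with hGdef
  have hGZ : G ⊆ Z := interior_subset
  have hGopen : IsOpen G := isOpen_interior
  -- Ω ∩ closure G ⊆ G
  have hclosureG : Ω ∩ closure G ⊆ G := by
    rintro σ₀ ⟨hσ₀Ω, hσ₀c⟩
    obtain ⟨r, hr, hbΩ, f, hf, hiff⟩ := hloc σ₀ hσ₀Ω
    obtain ⟨g, hgb, hgG⟩ : (ball σ₀ r ∩ G).Nonempty :=
      mem_closure_iff.mp hσ₀c (ball σ₀ r) isOpen_ball (mem_ball_self hr)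
    have hana : AnalyticOnNhd ℂ f (ball σ₀ r) := hf.analyticOnNhd isOpen_ball
    have hev : f =ᶠ[nhds g] 0 := by
      apply Filter.eventuallyEq_of_mem ((hGopen.inter isOpen_ball).mem_nhds ⟨hgG, hgb⟩)
      intro τ hτ
      show f τ = 0
      by_contra hne
      exact (hGZ hτ.1).2 ((hiff τ hτ.2).mpr hne)
    have hzero : EqOn f 0 (ball σ₀ r) :=
      hana.eqOn_zero_of_preconnected_of_eventuallyEq_zero
        ((convex_ball σ₀ r).isPreconnected) hgb hev
    have hballZ : ball σ₀ r ⊆ Z := by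
      intro τ hτ
      refine ⟨hbΩ hτ, fun hb => ?_⟩
      exact ((hiff τ hτ).mp hb) (hzero hτ)
    exact interior_maximal hballZ isOpen_ball (mem_ball_self hr)
  -- G = ∅
  have hGempty : G = ∅ := by
    by_contra hne
    obtain ⟨g0, hg0⟩ := Set.nonempty_iff_ne_empty.mpr hne
    have hVopen : IsOpen ((closure G)ᶜ) := isClosed_closure.isOpen_compl
    have hcover : Ω ⊆ G ∪ (closure G)ᶜ := by
      intro σ hσ
      by_cases h : σ ∈ closure G
      · exact Or.inl (hclosureG ⟨hσ, h⟩)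
      · exact Or.inr h
    have h1 : (Ω ∩ G).Nonempty := ⟨g0, hZΩ (hGZ hg0), hg0⟩
    have h2 : (Ω ∩ (closure G)ᶜ).Nonempty := by
      refine ⟨σ₁, hσ₁, fun hc => ?_⟩
      exact (hGZ (hclosureG ⟨hσ₁, hc⟩)).2 hbij
    obtain ⟨x, _, hxG, hxc⟩ :=
      hΩconn.isPreconnected G ((closure G)ᶜ) hGopen hVopen hcover h1 h2
    exact hxc (subset_closure hxG)
  constructor
  · intro z hz
    have hzΩ : z ∈ Ω := hz.1
    have hznb : ¬ Function.Bijective (P z) := hz.2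
    obtain ⟨r, hr, hbΩ, f, hf, hiff⟩ := hloc z hzΩ
    have hfz : f z = 0 := by
      by_contra h
      exact hznb ((hiff z (mem_ball_self hr)).mpr h)
    have hana : AnalyticAt ℂ f z := (hf.analyticOnNhd isOpen_ball) z (mem_ball_self hr)
    rcases hana.eventually_eq_zero_or_eventually_ne_zero with hcase | hcase
    · exfalso
      have hZmem : Z ∈ nhds z := by
        filter_upwards [hcase, isOpen_ball.mem_nhds (mem_ball_self hr)] with τ h1 h2
        exact ⟨hbΩ h2, fun hb => ((hiff τ h2).mp hb) (by simpa using h1)⟩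
      have : z ∈ G := mem_interior_iff_mem_nhds.mpr hZmem
      rw [hGempty] at this
      exact this
    · have hS : {τ : ℂ | τ ≠ z → f τ ≠ 0} ∩ ball z r ∈ nhds z := by
        have h1 : {τ : ℂ | τ ≠ z → f τ ≠ 0} ∈ nhds z := by
          have := eventually_nhdsWithin_iff.mp hcase
          exact this
        exact Filter.inter_mem h1 (isOpen_ball.mem_nhds (mem_ball_self hr))
      obtain ⟨ε, hε, hεsub⟩ := Metric.mem_nhds_iff.mp hS
      refine ⟨ball z ε, isOpen_ball.mem_nhds (mem_ball_self hε), ?_⟩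
      ext τ
      simp only [Set.mem_inter_iff, Set.mem_singleton_iff]
      constructor
      · rintro ⟨hτV, hτZ⟩
        have hτS := hεsub hτV
        by_contra hne
        have hfτ : f τ ≠ 0 := hτS.1 hne
        exact hτZ.2 ((hiff τ hτS.2).mpr hfτ)
      · rintro rfl
        exact ⟨mem_ball_self hε, hz⟩
  · rintro σ ⟨hσc, hσΩ⟩
    obtain ⟨r, hr, hbΩ, f, hf, hiff⟩ := hloc σ hσΩ
    refine ⟨hσΩ, fun hb => ?_⟩
    have hfσ : f σ ≠ 0 := (hiff σ (mem_ball_self hr)).mp hb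
    have hcont : ContinuousAt f σ :=
      ((hf.analyticOnNhd isOpen_ball) σ (mem_ball_self hr)).continuousAt
    have hnb : ∀ᶠ τ in nhds σ, τ ∉ Z := by
      filter_upwards [hcont.eventually_ne hfσ, isOpen_ball.mem_nhds (mem_ball_self hr)]
        with τ h1 h2
      exact fun hZτ => hZτ.2 ((hiff τ h2).mpr h1)
    obtain ⟨τ, hτ1, hτ2⟩ := mem_closure_iff_nhds.mp hσc _ hnb
    exact hτ1 hτ2
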